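/- Monotonicity of the phase-transition multiplier (key step for Corollary 1): let v : [0,1] → ℝ be continuously differentiable, convex, and positive, let δ_P > δ_A > 0, and set κ = (δ_A - δ_P)/δ_A < 0. Define Ψ(μ) = ∫_μ^1 Δ_0(x)/(x·v(x)) dx for μ ∈ (0,1], and Φ(μ_1) = e^{∫_{μ_1}^1 v(1)/(x·v(x)) dx}·e^{-κ·Ψ(μ_1)}/(δ_A·v(1)) - ∫_{μ_1}^1 (e^{-κ·Ψ(x)}/(δ_A·x·v(x)))·e^{∫_x^1 v(1)/(z·v(z)) dz} dx for μ_1 ∈ (0,1). Then Φ is differentiable on (0,1) with Φ'(μ_1) = κ·Δ_0(μ_1)·e^{∫_{μ_1}^1 v(1)/(x·v(x)) dx}·e^{-κ·Ψ(μ_1)} / (δ_A·v(1)·μ_1·v(μ_1)); in particular Φ'(μ_1) < 0 wherever Δ_0(μ_1) > 0, so Φ is strictly decreasing there. -/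

import Mathlib

open Set intervalIntegral MeasureTheory

noncomputable section

lemma aux_contOn_Ioc (F : ℝ → ℝ)
    (h : ∀ a ∈ Ioc (0:ℝ) 1, ContinuousOn F (Icc a 1)) :
    ContinuousOn F (Ioc (0:ℝ) 1) := by
  intro x hx
  have hx2 : (0:ℝ) < x / 2 := by linarith [hx.1]
  refine ContinuousWithinAt.mono_of_mem_nhdsWithin
    (h (x/2) ⟨hx2, by linarith [hx.2]⟩ x ⟨by linarith [hx.1], hx.2⟩) ?_
  rw [mem_nhdsWithin]
  refine ⟨Ioi (x/2), isOpen_Ioi, by rw [mem_Ioi]; linarith [hx.1], ?_⟩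
  rintro y ⟨hy1, hy2⟩
  exact ⟨le_of_lt hy1, hy2.2⟩

lemma aux_hasDerivAt (g : ℝ → ℝ) (hg : ContinuousOn g (Ioc (0:ℝ) 1))
    {μ : ℝ} (hμ : μ ∈ Ioo (0:ℝ) 1) :
    HasDerivAt (fun u => ∫ x in u..(1:ℝ), g x) (-g μ) μ := by
  have hsub : Icc μ 1 ⊆ Ioc (0:ℝ) 1 := fun x hx => ⟨lt_of_lt_of_le hμ.1 hx.1, hx.2⟩
  have hint : IntervalIntegrable g volume μ 1 := by
    apply ContinuousOn.intervalIntegrable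
    rw [uIcc_of_le hμ.2.le]
    exact hg.mono hsub
  have hca : ∀ x ∈ Ioo (0:ℝ) 1, ContinuousAt g x := fun x hx =>
    hg.continuousAt (Filter.mem_of_superset (isOpen_Ioo.mem_nhds hx) Ioo_subset_Ioc_self)
  exact intervalIntegral.integral_hasDerivAt_left hint
    (ContinuousAt.stronglyMeasurableAtFilter isOpen_Ioo hca μ hμ) (hca μ hμ)

lemma aux_contOn_primitive (g : ℝ → ℝ) (hg : ContinuousOn g (Ioc (0:ℝ) 1))
    {a : ℝ} (ha : a ∈ Ioc (0:ℝ) 1) :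
    ContinuousOn (fun u => ∫ x in u..(1:ℝ), g x) (Icc a 1) := by
  have hsub : Icc a 1 ⊆ Ioc (0:ℝ) 1 := fun x hx => ⟨lt_of_lt_of_le ha.1 hx.1, hx.2⟩
  have h := intervalIntegral.continuousOn_primitive_interval_left
    (f := g) (μ := volume) (a := a) (b := 1)
    (by rw [uIcc_of_le ha.2]; exact (hg.mono hsub).integrableOn_Icc)
  rwa [uIcc_of_le ha.2] at h


theorem phase_transition_multiplier_monotone
    (v v' : ℝ → ℝ) (δA δP : ℝ)
    (hδA : 0 < δA) (hδ : δA < δP)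
    (hconv : ConvexOn ℝ (Icc (0:ℝ) 1) v)
    (hderiv : ∀ x ∈ Icc (0:ℝ) 1, HasDerivWithinAt v (v' x) (Icc (0:ℝ) 1) x)
    (hcont : ContinuousOn v' (Icc (0:ℝ) 1))
    (hpos : ∀ x ∈ Icc (0:ℝ) 1, 0 < v x) :
    let κ : ℝ := (δA - δP) / δA
    let Δ0 : ℝ → ℝ := fun μ => v 1 - v μ + μ * v' μ
    let Ψ : ℝ → ℝ := fun μ => ∫ x in μ..(1:ℝ), Δ0 x / (x * v x)
    let Φ : ℝ → ℝ := fun μ1 =>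
      Real.exp (∫ x in μ1..(1:ℝ), v 1 / (x * v x)) * Real.exp (-κ * Ψ μ1) / (δA * v 1)
      - ∫ x in μ1..(1:ℝ),
          (Real.exp (-κ * Ψ x) / (δA * x * v x))
            * Real.exp (∫ z in x..(1:ℝ), v 1 / (z * v z))
    (∀ μ1 ∈ Ioo (0:ℝ) 1,
      HasDerivAt Φ
        (κ * Δ0 μ1 * Real.exp (∫ x in μ1..(1:ℝ), v 1 / (x * v x))
            * Real.exp (-κ * Ψ μ1) / (δA * v 1 * (μ1 * v μ1))) μ1) ∧
    (∀ μ1 ∈ Ioo (0:ℝ) 1, 0 < Δ0 μ1 →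
      κ * Δ0 μ1 * Real.exp (∫ x in μ1..(1:ℝ), v 1 / (x * v x))
          * Real.exp (-κ * Ψ μ1) / (δA * v 1 * (μ1 * v μ1)) < 0) ∧
    StrictAntiOn Φ {μ1 | μ1 ∈ Ioo (0:ℝ) 1 ∧ 0 < Δ0 μ1} := by
  intro κ Δ0 Ψ Φ
  have hIoc : Ioc (0:ℝ) 1 ⊆ Icc (0:ℝ) 1 := Ioc_subset_Icc_self
  have hvc : ContinuousOn v (Icc (0:ℝ) 1) := fun x hx => (hderiv x hx).continuousWithinAt
  have hκ : κ < 0 := div_neg_of_neg_of_pos (by linarith) hδA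
  have hv1 : 0 < v 1 := hpos 1 (by norm_num)
  -- continuity of the basic integrands on (0,1]
  have hxvne : ∀ x ∈ Ioc (0:ℝ) 1, x * v x ≠ 0 := fun x hx =>
    mul_ne_zero (ne_of_gt hx.1) (ne_of_gt (hpos x (hIoc hx)))
  have hxvc : ContinuousOn (fun x => x * v x) (Ioc (0:ℝ) 1) :=
    continuousOn_id.mul (hvc.mono hIoc)
  have hg1c : ContinuousOn (fun x => v 1 / (x * v x)) (Ioc (0:ℝ) 1) :=
    continuousOn_const.div hxvc hxvne
  have hΔc : ContinuousOn Δ0 (Ioc (0:ℝ) 1) :=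
    (continuousOn_const.sub (hvc.mono hIoc)).add (continuousOn_id.mul (hcont.mono hIoc))
  have hg2c : ContinuousOn (fun x => Δ0 x / (x * v x)) (Ioc (0:ℝ) 1) :=
    hΔc.div hxvc hxvne
  -- continuity of Ψ and of the inner exponential integral, on (0,1]
  have hΨc : ContinuousOn Ψ (Ioc (0:ℝ) 1) :=
    aux_contOn_Ioc Ψ (fun a ha => aux_contOn_primitive _ hg2c ha)
  have hGc : ContinuousOn (fun x => ∫ z in x..(1:ℝ), v 1 / (z * v z)) (Ioc (0:ℝ) 1) :=
    aux_contOn_Ioc _ (fun a ha => aux_contOn_primitive _ hg1c ha)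
  -- continuity of the big integrand f
  have hfc : ContinuousOn
      (fun x => (Real.exp (-κ * Ψ x) / (δA * x * v x))
          * Real.exp (∫ z in x..(1:ℝ), v 1 / (z * v z))) (Ioc (0:ℝ) 1) := by
    refine ContinuousOn.mul (ContinuousOn.div ?_ ?_ ?_) ?_
    · exact Real.continuous_exp.comp_continuousOn (continuousOn_const.mul hΨc)
    · exact (continuousOn_const.mul continuousOn_id).mul (hvc.mono hIoc)
    · intro x hx
      exact mul_ne_zero (mul_ne_zero (ne_of_gt hδA) (ne_of_gt hx.1))
        (ne_of_gt (hpos x (hIoc hx)))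
    · exact Real.continuous_exp.comp_continuousOn hGc
  -- the derivative statement
  have key : ∀ μ1 ∈ Ioo (0:ℝ) 1,
      HasDerivAt Φ
        (κ * Δ0 μ1 * Real.exp (∫ x in μ1..(1:ℝ), v 1 / (x * v x))
            * Real.exp (-κ * Ψ μ1) / (δA * v 1 * (μ1 * v μ1))) μ1 := by
    intro μ1 hμ1
    have hμ0 : μ1 ≠ 0 := ne_of_gt hμ1.1
    have hvμ : v μ1 ≠ 0 := ne_of_gt (hpos μ1 ⟨hμ1.1.le, hμ1.2.le⟩)
    have hG : HasDerivAt (fun u => ∫ x in u..(1:ℝ), v 1 / (x * v x))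
        (-(v 1 / (μ1 * v μ1))) μ1 := aux_hasDerivAt _ hg1c hμ1
    have hΨd : HasDerivAt Ψ (-(Δ0 μ1 / (μ1 * v μ1))) μ1 := aux_hasDerivAt _ hg2c hμ1
    have hB : HasDerivAt
        (fun u => ∫ x in u..(1:ℝ),
          (Real.exp (-κ * Ψ x) / (δA * x * v x))
            * Real.exp (∫ z in x..(1:ℝ), v 1 / (z * v z)))
        (-((Real.exp (-κ * Ψ μ1) / (δA * μ1 * v μ1))
            * Real.exp (∫ z in μ1..(1:ℝ), v 1 / (z * v z)))) μ1 :=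
      aux_hasDerivAt _ hfc hμ1
    have hA := ((hG.exp.mul ((hΨd.const_mul (-κ)).exp)).div_const (δA * v 1))
    have hAB := hA.sub hB
    convert hAB using 1
    case e'_9 =>
      field_simp
      ring
    all_goals rfl
  refine ⟨key, ?_, ?_⟩
  · intro μ1 hμ1 hΔ
    have hden : 0 < δA * v 1 * (μ1 * v μ1) :=
      mul_pos (mul_pos hδA hv1) (mul_pos hμ1.1 (hpos μ1 ⟨hμ1.1.le, hμ1.2.le⟩))
    have hnum : κ * Δ0 μ1 * Real.exp (∫ x in μ1..(1:ℝ), v 1 / (x * v x))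
        * Real.exp (-κ * Ψ μ1) < 0 := by
      have h := mul_neg_of_neg_of_pos hκ
        (mul_pos (mul_pos hΔ (Real.exp_pos (∫ x in μ1..(1:ℝ), v 1 / (x * v x))))
          (Real.exp_pos (-κ * Ψ μ1)))
      calc κ * Δ0 μ1 * Real.exp (∫ x in μ1..(1:ℝ), v 1 / (x * v x))
            * Real.exp (-κ * Ψ μ1)
          = κ * (Δ0 μ1 * Real.exp (∫ x in μ1..(1:ℝ), v 1 / (x * v x))
            * Real.exp (-κ * Ψ μ1)) := by ring
        _ < 0 := h
    exact div_neg_of_neg_of_pos hnum hden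
  · -- Δ0 is monotone nondecreasing on [0,1]
    have hΔmono : ∀ p q : ℝ, p ∈ Icc (0:ℝ) 1 → q ∈ Icc (0:ℝ) 1 → p ≤ q → Δ0 p ≤ Δ0 q := by
      intro p q hp hq hpq
      rcases eq_or_lt_of_le hpq with h | h
      · exact h ▸ le_refl _
      · have h1 : v' p ≤ slope v p q :=
          hconv.le_slope_of_hasDerivWithinAt hp hq h (hderiv p hp)
        have h2 : slope v p q ≤ v' q :=
          hconv.slope_le_of_hasDerivWithinAt hp hq h (hderiv q hq)
        have hvv : v' p ≤ v' q := h1.trans h2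
        rw [slope_def_field] at h2
        have hqp : (0:ℝ) < q - p := by linarith
        have h2' : v q - v p ≤ v' q * (q - p) := (div_le_iff₀ hqp).mp h2
        have hpvp : p * v' p ≤ p * v' q := mul_le_mul_of_nonneg_left hvv hp.1
        show v 1 - v p + p * v' p ≤ v 1 - v q + q * v' q
        nlinarith [h2', hpvp]
    intro a ha b hb hab
    obtain ⟨haI, haΔ⟩ := ha
    obtain ⟨hbI, hbΔ⟩ := hb
    have hsub : Icc a b ⊆ Ioo (0:ℝ) 1 := fun x hx =>
      ⟨lt_of_lt_of_le haI.1 hx.1, lt_of_le_of_lt hx.2 hbI.2⟩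
    have hanti : StrictAntiOn Φ (Icc a b) := by
      refine strictAntiOn_of_hasDerivWithinAt_neg (convex_Icc a b)
        (fun x hx => ((key x (hsub hx)).continuousAt).continuousWithinAt)
        (f' := fun x => κ * Δ0 x * Real.exp (∫ t in x..(1:ℝ), v 1 / (t * v t))
            * Real.exp (-κ * Ψ x) / (δA * v 1 * (x * v x))) ?_ ?_
      · intro x hx
        rw [interior_Icc] at hx
        exact (key x (hsub (Ioo_subset_Icc_self hx))).hasDerivWithinAt
      · intro x hx
        rw [interior_Icc] at hx
        have hxI : x ∈ Ioo (0:ℝ) 1 := hsub (Ioo_subset_Icc_self hx)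
        have hΔx : 0 < Δ0 x :=
          lt_of_lt_of_le haΔ (hΔmono a x ⟨haI.1.le, haI.2.le⟩ ⟨hxI.1.le, hxI.2.le⟩ hx.1.le)
        have hden : 0 < δA * v 1 * (x * v x) :=
          mul_pos (mul_pos hδA hv1) (mul_pos hxI.1 (hpos x ⟨hxI.1.le, hxI.2.le⟩))
        have hnum : κ * Δ0 x * Real.exp (∫ t in x..(1:ℝ), v 1 / (t * v t))
            * Real.exp (-κ * Ψ x) < 0 := by
          have h := mul_neg_of_neg_of_pos hκ
            (mul_pos (mul_pos hΔx (Real.exp_pos (∫ t in x..(1:ℝ), v 1 / (t * v t))))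
              (Real.exp_pos (-κ * Ψ x)))
          calc κ * Δ0 x * Real.exp (∫ t in x..(1:ℝ), v 1 / (t * v t))
                * Real.exp (-κ * Ψ x)
              = κ * (Δ0 x * Real.exp (∫ t in x..(1:ℝ), v 1 / (t * v t))
                * Real.exp (-κ * Ψ x)) := by ring
            _ < 0 := h
        exact div_neg_of_neg_of_pos hnum hden
    exact hanti (left_mem_Icc.2 hab.le) (right_mem_Icc.2 hab.le) hab

end
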